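/- For a finite-state additive noise channel over an alphabet of size q with strongly connected state graph having Perron eigenvalue λ and state set S: for each codeword c of length n, the set of inputs confusable with c has size at most (β|S|λⁿ)², where β is the Perron constant with |𝒱(s₀,n)| ≤ βλⁿ; hence by the greedy covering argument the zero-error capacity satisfies C_0 ≥ 1 − 2 log_q λ. -/

import Mathlib

open Classical in
/-- Counting bound for the confusability set. -/
lemma confBound18 {X S : Type*} [Fintype X] [DecidableEq X] [AddGroup X] [Fintype S]
    (𝒱 : S → (n : ℕ) → Set (Fin n → X)) (lam β : ℝ) (hβ : 0 ≤ β) (hlam : 0 ≤ lam)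
    (hcount : ∀ (s : S) (n : ℕ), (Nat.card (𝒱 s n) : ℝ) ≤ β * lam ^ n)
    (n : ℕ) (c : Fin n → X) :
    ((Nat.card {x' : Fin n → X |
        ∃ (s s' : S), ∃ v ∈ 𝒱 s n, ∃ v' ∈ 𝒱 s' n, c + v = x' + v'} : ℕ) : ℝ)
      ≤ (β * (Fintype.card S : ℝ) * lam ^ n) ^ 2 := by
  set Conf : Set (Fin n → X) :=
    {x' | ∃ (s s' : S), ∃ v ∈ 𝒱 s n, ∃ v' ∈ 𝒱 s' n, c + v = x' + v'} with hConf
  let Vf : S → Finset (Fin n → X) := fun s => (Set.toFinite (𝒱 s n)).toFinset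
  let Cf : Finset (Fin n → X) := (Set.toFinite Conf).toFinset
  have hVcard : ∀ s : S, ((Vf s).card : ℝ) ≤ β * lam ^ n := by
    intro s
    have := hcount s n
    rwa [Nat.card_coe_set_eq, Set.ncard_eq_toFinset_card (𝒱 s n) (Set.toFinite _)] at this
  have hsub : Cf ⊆ (Finset.univ : Finset (S × S)).biUnion
      (fun p => Finset.image (fun q : (Fin n → X) × (Fin n → X) => c + q.1 - q.2)
        (Vf p.1 ×ˢ Vf p.2)) := by
    intro x hx
    rw [Set.Finite.mem_toFinset] at hx
    obtain ⟨s, s', v, hv, v', hv', hxv⟩ := hx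
    refine Finset.mem_biUnion.2 ⟨(s, s'), Finset.mem_univ _, Finset.mem_image.2
      ⟨(v, v'), Finset.mem_product.2 ⟨?_, ?_⟩, ?_⟩⟩
    · exact (Set.Finite.mem_toFinset _).2 hv
    · exact (Set.Finite.mem_toFinset _).2 hv'
    · have : x = c + v - v' := eq_sub_iff_add_eq.2 hxv.symm
      exact this.symm
  have hcardle : (Cf.card : ℝ) ≤ ∑ p : S × S, ((Vf p.1).card : ℝ) * ((Vf p.2).card : ℝ) := by
    have h1 : Cf.card ≤ ∑ p : S × S, ((Vf p.1) ×ˢ (Vf p.2)).card :=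
      le_trans (Finset.card_le_card hsub)
        (le_trans (Finset.card_biUnion_le) (Finset.sum_le_sum fun p _ => Finset.card_image_le))
    have h2 : (Cf.card : ℝ) ≤ ∑ p : S × S, (((Vf p.1) ×ˢ (Vf p.2)).card : ℝ) := by
      exact_mod_cast le_trans h1 le_rfl
    calc (Cf.card : ℝ) ≤ ∑ p : S × S, (((Vf p.1) ×ˢ (Vf p.2)).card : ℝ) := h2
      _ = ∑ p : S × S, ((Vf p.1).card : ℝ) * ((Vf p.2).card : ℝ) := by
          refine Finset.sum_congr rfl fun p _ => ?_
          rw [Finset.card_product]; push_cast; ring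
  have hbl : 0 ≤ β * lam ^ n := mul_nonneg hβ (pow_nonneg hlam n)
  have hsum : ∑ p : S × S, ((Vf p.1).card : ℝ) * ((Vf p.2).card : ℝ)
      ≤ (β * (Fintype.card S : ℝ) * lam ^ n) ^ 2 := by
    have : ∑ p : S × S, ((Vf p.1).card : ℝ) * ((Vf p.2).card : ℝ)
        ≤ ∑ _p : S × S, (β * lam ^ n) * (β * lam ^ n) := by
      refine Finset.sum_le_sum fun p _ => ?_
      exact mul_le_mul (hVcard p.1) (hVcard p.2) (by positivity) hbl
    calc ∑ p : S × S, ((Vf p.1).card : ℝ) * ((Vf p.2).card : ℝ)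
        ≤ ∑ _p : S × S, (β * lam ^ n) * (β * lam ^ n) := this
      _ = (Fintype.card (S × S) : ℝ) * ((β * lam ^ n) * (β * lam ^ n)) := by
          rw [Finset.sum_const, Finset.card_univ, nsmul_eq_mul]
      _ = (β * (Fintype.card S : ℝ) * lam ^ n) ^ 2 := by
          rw [Fintype.card_prod]; push_cast; ring
  have hNc : (Nat.card Conf : ℝ) = (Cf.card : ℝ) := by
    rw [Nat.card_coe_set_eq, Set.ncard_eq_toFinset_card Conf (Set.toFinite _)]
  calc ((Nat.card Conf : ℕ) : ℝ) = (Cf.card : ℝ) := hNc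
    _ ≤ ∑ p : S × S, ((Vf p.1).card : ℝ) * ((Vf p.2).card : ℝ) := hcardle
    _ ≤ (β * (Fintype.card S : ℝ) * lam ^ n) ^ 2 := hsum

/-- For a finite-state additive noise channel: the confusability set of each codeword of
length `n` has size at most `(β |S| λⁿ)²`, and consequently `C₀ ≥ 1 − 2 log_q λ`. -/
theorem stmt18 {X S : Type*} [Fintype X] [DecidableEq X] [AddGroup X] [Fintype S] [Nonempty S]
    (q : ℕ) (hq : 2 ≤ q) (hcard : Fintype.card X = q)
    (T : S → X → S → Prop)
    (𝒱 : S → (n : ℕ) → Set (Fin n → X))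
    (h𝒱 : ∀ (s : S) (n : ℕ), 𝒱 s n = {v | ∃ σ : Fin (n + 1) → S, σ 0 = s ∧
      ∀ i : Fin n, T (σ i.castSucc) (v i) (σ i.succ)})
    (lam β : ℝ) (hβ : 0 < β) (hlam : 1 ≤ lam)
    (hcount : ∀ (s : S) (n : ℕ), (Nat.card (𝒱 s n) : ℝ) ≤ β * lam ^ n)
    (C0 : ℝ)
    (hC0 : IsLUB {r : ℝ | ∃ (n : ℕ) (𝒞 : Finset (Fin n → X)), 0 < n ∧ 0 < 𝒞.card ∧
      (∀ x ∈ 𝒞, ∀ x' ∈ 𝒞, x ≠ x' →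
        ¬ ∃ (s s' : S), ∃ v ∈ 𝒱 s n, ∃ v' ∈ 𝒱 s' n, x + v = x' + v') ∧
      r = Real.logb q 𝒞.card / n} C0) :
    (∀ (n : ℕ) (c : Fin n → X),
      ((Nat.card {x' : Fin n → X |
          ∃ (s s' : S), ∃ v ∈ 𝒱 s n, ∃ v' ∈ 𝒱 s' n, c + v = x' + v'} : ℕ) : ℝ)
        ≤ (β * (Fintype.card S : ℝ) * lam ^ n) ^ 2) ∧
    1 - 2 * Real.logb q lam ≤ C0 := by
  classical
  have hlam0 : (0:ℝ) ≤ lam := le_trans zero_le_one hlam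
  have hconf := confBound18 𝒱 lam β hβ.le hlam0 hcount
  refine ⟨hconf, ?_⟩
  -- β ≥ 1
  have hβ1 : (1:ℝ) ≤ β := by
    obtain ⟨s⟩ := ‹Nonempty S›
    have hne : (𝒱 s 0).Nonempty := by
      rw [h𝒱]
      exact ⟨fun i => i.elim0, fun _ => s, rfl, fun i => i.elim0⟩
    have : 0 < Nat.card (𝒱 s 0) := by
      have : Nonempty (𝒱 s 0) := hne.to_subtype
      exact Nat.card_pos
    have h1 : (1:ℝ) ≤ (Nat.card (𝒱 s 0) : ℝ) := by exact_mod_cast this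
    have := le_trans h1 (hcount s 0)
    simpa using this
  have hS1 : (1:ℝ) ≤ (Fintype.card S : ℝ) := by
    exact_mod_cast Fintype.card_pos
  have hq1 : (1:ℝ) < (q:ℝ) := by exact_mod_cast lt_of_lt_of_le one_lt_two hq
  have hXne : Nonempty X := Fintype.card_pos_iff.mp (by omega)
  set D : ℝ := 2 * (β * (Fintype.card S : ℝ)) ^ 2 with hD
  have hD1 : (1:ℝ) ≤ D := by
    have hbs : (1:ℝ) ≤ β * (Fintype.card S : ℝ) := by nlinarith
    have : (1:ℝ) ≤ (β * (Fintype.card S : ℝ)) ^ 2 := one_le_pow₀ hbs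
    rw [hD]; linarith
  have hlogD : 0 ≤ Real.logb q D := Real.logb_nonneg hq1 hD1
  -- main rate bound for each n ≥ 1
  have hrate : ∀ n : ℕ, 0 < n →
      ∃ r ∈ {r : ℝ | ∃ (n : ℕ) (𝒞 : Finset (Fin n → X)), 0 < n ∧ 0 < 𝒞.card ∧
        (∀ x ∈ 𝒞, ∀ x' ∈ 𝒞, x ≠ x' →
          ¬ ∃ (s s' : S), ∃ v ∈ 𝒱 s n, ∃ v' ∈ 𝒱 s' n, x + v = x' + v') ∧
        r = Real.logb q 𝒞.card / n},
        1 - 2 * Real.logb q lam - Real.logb q D / n ≤ r := by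
    intro n hn
    set P : Finset (Fin n → X) → Prop := fun 𝒞 => ∀ x ∈ 𝒞, ∀ x' ∈ 𝒞, x ≠ x' →
      ¬ ∃ (s s' : S), ∃ v ∈ 𝒱 s n, ∃ v' ∈ 𝒱 s' n, x + v = x' + v' with hP
    have hPempty : P ∅ := by intro x hx; simp at hx
    obtain ⟨𝒞, h𝒞G, h𝒞max⟩ := Finset.exists_max_image
      (Finset.univ.filter P) Finset.card
      ⟨∅, Finset.mem_filter.mpr ⟨Finset.mem_univ _, hPempty⟩⟩
    have h𝒞P : P 𝒞 := (Finset.mem_filter.mp h𝒞G).2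
    -- 𝒞 is nonempty
    have h𝒞card : 0 < 𝒞.card := by
      obtain ⟨x₀⟩ := (inferInstance : Nonempty (Fin n → X))
      have hsing : P {x₀} := by
        intro x hx x' hx' hne
        simp only [Finset.mem_singleton] at hx hx'
        exact absurd (hx.trans hx'.symm) hne
      have := h𝒞max {x₀} (Finset.mem_filter.mpr ⟨Finset.mem_univ _, hsing⟩)
      simp only [Finset.card_singleton] at this
      omega
    -- covering
    let ConfS : (Fin n → X) → Set (Fin n → X) := fun c =>
      {x' | ∃ (s s' : S), ∃ v ∈ 𝒱 s n, ∃ v' ∈ 𝒱 s' n, c + v = x' + v'}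
    let ConfF : (Fin n → X) → Finset (Fin n → X) := fun c => (Set.toFinite (ConfS c)).toFinset
    have hcover : (Finset.univ : Finset (Fin n → X)) ⊆
        𝒞.biUnion (fun c => insert c (ConfF c)) := by
      intro x _
      by_cases hx : x ∈ 𝒞
      · exact Finset.mem_biUnion.2 ⟨x, hx, Finset.mem_insert_self _ _⟩
      · by_cases hadd : P (insert x 𝒞)
        · exfalso
          have := h𝒞max (insert x 𝒞) (Finset.mem_filter.mpr ⟨Finset.mem_univ _, hadd⟩)
          rw [Finset.card_insert_of_notMem hx] at this
          omega
        · simp only [hP] at hadd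
          push_neg at hadd
          obtain ⟨a, ha, b, hb, hab, s, s', v, hv, v', hv', heq⟩ := hadd
          rcases Finset.mem_insert.mp ha with ha' | ha' <;>
            rcases Finset.mem_insert.mp hb with hb' | hb'
          · exact absurd (ha'.trans hb'.symm) hab
          · -- a = x, b ∈ 𝒞 : x + v = b + v', so x ∈ ConfS b
            subst ha'
            refine Finset.mem_biUnion.2 ⟨b, hb', Finset.mem_insert.2 (Or.inr ?_)⟩
            exact (Set.Finite.mem_toFinset _).2 ⟨s', s, v', hv', v, hv, heq.symm⟩
          · -- b = x, a ∈ 𝒞 : a + v = x + v'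
            subst hb'
            refine Finset.mem_biUnion.2 ⟨a, ha', Finset.mem_insert.2 (Or.inr ?_)⟩
            exact (Set.Finite.mem_toFinset _).2 ⟨s, s', v, hv, v', hv', heq⟩
          · exfalso
            exact h𝒞P a ha' b hb' hab ⟨s, s', v, hv, v', hv', heq⟩
    set M : ℕ := 𝒞.card with hM
    set K : ℝ := (β * (Fintype.card S : ℝ) * lam ^ n) ^ 2 with hK
    have hK1 : (1:ℝ) ≤ K := by
      have h1 : (1:ℝ) ≤ lam ^ n := one_le_pow₀ hlam
      have hbs : (1:ℝ) ≤ β * (Fintype.card S : ℝ) := by nlinarith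
      have h2 : (1:ℝ) ≤ β * (Fintype.card S : ℝ) * lam ^ n :=
        le_trans hbs (le_mul_of_one_le_right (by linarith) h1)
      nlinarith
    have hConfFcard : ∀ c, ((ConfF c).card : ℝ) ≤ K := by
      intro c
      have := hconf n c
      rwa [Nat.card_coe_set_eq, Set.ncard_eq_toFinset_card _ (Set.toFinite _)] at this
    -- counting
    have hcount1 : ((q:ℝ)) ^ n ≤ (M : ℝ) * (1 + K) := by
      have hcard1 : (Finset.univ : Finset (Fin n → X)).card = q ^ n := by
        rw [Finset.card_univ, Fintype.card_fun, hcard, Fintype.card_fin]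
      have h1 : ((Finset.univ : Finset (Fin n → X)).card : ℝ)
          ≤ ∑ c ∈ 𝒞, ((insert c (ConfF c)).card : ℝ) := by
        exact_mod_cast le_trans (Finset.card_le_card hcover) Finset.card_biUnion_le
      have h2 : ∑ c ∈ 𝒞, ((insert c (ConfF c)).card : ℝ) ≤ ∑ _c ∈ 𝒞, (1 + K) := by
        refine Finset.sum_le_sum fun c _ => ?_
        have : (insert c (ConfF c)).card ≤ 1 + (ConfF c).card := by
          rw [add_comm]; exact Finset.card_insert_le _ _
        calc ((insert c (ConfF c)).card : ℝ) ≤ 1 + ((ConfF c).card : ℝ) := by exact_mod_cast this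
          _ ≤ 1 + K := by linarith [hConfFcard c]
      rw [hcard1] at h1
      push_cast at h1
      calc ((q:ℝ)) ^ n ≤ ∑ c ∈ 𝒞, ((insert c (ConfF c)).card : ℝ) := h1
        _ ≤ ∑ _c ∈ 𝒞, (1 + K) := h2
        _ = (M : ℝ) * (1 + K) := by rw [Finset.sum_const, nsmul_eq_mul]
    have hcount2 : ((q:ℝ)) ^ n ≤ (M : ℝ) * (D * lam ^ (2 * n)) := by
      have hDK : (1 + K) ≤ D * lam ^ (2 * n) := by
        have : D * lam ^ (2*n) = 2 * K := by
          rw [hK, hD, pow_mul]; ring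
        rw [this]; linarith
      have hM0 : (0:ℝ) ≤ M := Nat.cast_nonneg _
      calc ((q:ℝ)) ^ n ≤ (M : ℝ) * (1 + K) := hcount1
        _ ≤ (M : ℝ) * (D * lam ^ (2*n)) := by
            exact mul_le_mul_of_nonneg_left hDK hM0
    -- take logs
    have hM0 : (0:ℝ) < M := by exact_mod_cast h𝒞card
    have hq0 : (0:ℝ) < q := by linarith
    have hDl0 : (0:ℝ) < D * lam ^ (2*n) := by positivity
    have hlog1 : (n : ℝ) ≤ Real.logb q M + Real.logb q (D * lam ^ (2*n)) := by
      have := (Real.logb_le_logb hq1 (by positivity) (by positivity)).mpr hcount2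
      rwa [Real.logb_pow, Real.logb_self_eq_one hq1, mul_one,
        Real.logb_mul (ne_of_gt hM0) (ne_of_gt hDl0)] at this
    have hlog2 : Real.logb q (D * lam ^ (2*n))
        = Real.logb q D + 2 * n * Real.logb q lam := by
      rw [Real.logb_mul (by positivity) (by positivity), Real.logb_pow]
      push_cast; ring
    have hlogM : (n : ℝ) - Real.logb q D - 2 * n * Real.logb q lam ≤ Real.logb q M := by
      rw [hlog2] at hlog1; linarith
    refine ⟨Real.logb q M / n, ⟨n, 𝒞, hn, h𝒞card, h𝒞P, rfl⟩, ?_⟩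
    have hn0 : (0:ℝ) < n := by exact_mod_cast hn
    have hdiv : ((n:ℝ) - Real.logb q D - 2 * n * Real.logb q lam) / n
        ≤ Real.logb q M / n := by gcongr
    have heq : ((n:ℝ) - Real.logb q D - 2 * n * Real.logb q lam) / n
        = 1 - 2 * Real.logb q lam - Real.logb q D / n := by
      field_simp; ring
    linarith
  -- epsilon argument
  refine le_of_forall_pos_le_add fun ε hε => ?_
  obtain ⟨n₀, hn₀⟩ := exists_nat_gt (Real.logb q D / ε)
  set n := n₀ + 1 with hn
  have hnpos : 0 < n := Nat.succ_pos _
  have hn0 : (0:ℝ) < n := by exact_mod_cast hnpos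
  have hDn : Real.logb q D / n ≤ ε := by
    have hlt : Real.logb q D / ε < n := by
      rw [hn]; push_cast; calc Real.logb q D / ε < n₀ := hn₀
        _ ≤ (n₀:ℝ) + 1 := by linarith
    rw [div_le_iff₀ hn0]
    rw [div_lt_iff₀ hε] at hlt
    nlinarith
  obtain ⟨r, hrmem, hrge⟩ := hrate n hnpos
  have hrC0 : r ≤ C0 := hC0.1 hrmem
  linarith
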